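/- Let R be a ring (associative with identity, not necessarily commutative). Then R is uniquely D-nil-clean if and only if R is a D-ring or R is uniquely nil-clean. -/

import Mathlib

universe u v

/-- An element `e` is a very idempotent if `e` or `-e` is an idempotent. -/
def IsVeryIdempotent {R : Type u} [Ring R] (e : R) : Prop :=
  IsIdempotentElem e ∨ IsIdempotentElem (-e)

/-- `a` is uniquely weakly nil-clean: it is a sum of a nilpotent and a very idempotent,
and for any two such representations `a = w₁ + e₁ = w₂ + e₂` one has `e₁ ^ 2 = e₂ ^ 2`. -/
def IsUniquelyWeaklyNilClean {R : Type u} [Ring R] (a : R) : Prop :=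
  (∃ w e : R, IsNilpotent w ∧ IsVeryIdempotent e ∧ a = w + e) ∧
  ∀ w₁ e₁ w₂ e₂ : R, IsNilpotent w₁ → IsVeryIdempotent e₁ → IsNilpotent w₂ →
    IsVeryIdempotent e₂ → a = w₁ + e₁ → a = w₂ + e₂ → e₁ ^ 2 = e₂ ^ 2

/-- A ring is uniquely weakly nil-clean if every element is. -/
def UniquelyWeaklyNilCleanRing (R : Type u) [Ring R] : Prop :=
  ∀ a : R, IsUniquelyWeaklyNilClean a

/-- `a` is uniquely nil-clean: it is a sum of a nilpotent and an idempotent,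
and for any two such representations `a = w₁ + e₁ = w₂ + e₂` one has `e₁ = e₂`. -/
def IsUniquelyNilClean {R : Type u} [Ring R] (a : R) : Prop :=
  (∃ w e : R, IsNilpotent w ∧ IsIdempotentElem e ∧ a = w + e) ∧
  ∀ w₁ e₁ w₂ e₂ : R, IsNilpotent w₁ → IsIdempotentElem e₁ → IsNilpotent w₂ →
    IsIdempotentElem e₂ → a = w₁ + e₁ → a = w₂ + e₂ → e₁ = e₂

/-- A ring is uniquely nil-clean if every element is. -/
def UniquelyNilCleanRing (R : Type u) [Ring R] : Prop :=
  ∀ a : R, IsUniquelyNilClean a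

/-- `a` is a zero-divisor: there are nonzero `b, c` with `a * b = 0` and `c * a = 0`. -/
def IsZeroDivisorPair {R : Type u} [Ring R] (a : R) : Prop :=
  ∃ b c : R, b ≠ 0 ∧ c ≠ 0 ∧ a * b = 0 ∧ c * a = 0

/-- A ring is abelian if every idempotent is central. -/
def AbelianRing (R : Type u) [Ring R] : Prop :=
  ∀ e : R, IsIdempotentElem e → ∀ x : R, e * x = x * e

/-- A ring is periodic if every element satisfies `a ^ m = a ^ n` for distinct positive `m, n`. -/
def PeriodicRing (R : Type u) [Ring R] : Prop :=
  ∀ a : R, ∃ m n : ℕ, 0 < m ∧ 0 < n ∧ m ≠ n ∧ a ^ m = a ^ n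

/-- A Boolean ring: every element is idempotent. -/
def IsBooleanRing (R : Type u) [Ring R] : Prop :=
  ∀ a : R, IsIdempotentElem a

/-- `R / J(R)` is isomorphic to `S`, expressed via a surjective ring homomorphism
whose kernel is exactly the Jacobson radical of `R`. -/
def QuotJacobsonIsoTo (R : Type u) [Ring R] (S : Type v) [Ring S] : Prop :=
  ∃ f : R →+* S, Function.Surjective f ∧
    ∀ a : R, f a = 0 ↔ a ∈ Ideal.jacobson (⊥ : Ideal R)

lemma auxIdemAdd {R : Type u} [Ring R] {f u : R} (hf : IsIdempotentElem f)
    (h1 : f * u = u) (h2 : u * f = 0) (h3 : u * u = 0) : IsIdempotentElem (f + u) := by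
  unfold IsIdempotentElem
  rw [add_mul, mul_add, mul_add, hf.eq, h1, h2, h3]
  abel

lemma auxIdemAdd' {R : Type u} [Ring R] {f u : R} (hf : IsIdempotentElem f)
    (h1 : f * u = 0) (h2 : u * f = u) (h3 : u * u = 0) : IsIdempotentElem (f + u) := by
  unfold IsIdempotentElem
  rw [add_mul, mul_add, mul_add, hf.eq, h1, h2, h3]
  abel

/-- Every idempotent is central in a uniquely D-nil-clean ring. -/
lemma centralOfH {R : Type u} [Ring R]
    (H : ∀ a : R, IsZeroDivisorPair a → IsUniquelyNilClean a)
    {f : R} (hf : IsIdempotentElem f) (x : R) : f * x = x * f := by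
  by_cases h0 : f = 0
  · simp [h0]
  by_cases h1f : f = 1
  · simp [h1f]
  have hne : (1 : R) - f ≠ 0 := sub_ne_zero.mpr fun h => h1f h.symm
  have hf0 : f * (1 - f) = 0 := by rw [mul_sub, mul_one, hf.eq, sub_self]
  have h0f : (1 - f) * f = 0 := by rw [sub_mul, one_mul, hf.eq, sub_self]
  have hu := (H f ⟨1 - f, 1 - f, hne, hne, hf0, h0f⟩).2
  have key1 : f * x * (1 - f) = 0 := by
    set u := f * x * (1 - f) with hudef
    have hufu : f * u = u := by rw [hudef, ← mul_assoc, ← mul_assoc, hf.eq]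
    have huf : u * f = 0 := by rw [hudef, mul_assoc, h0f, mul_zero]
    have huu : u * u = 0 := by
      have : u * u = (f * x) * (((1 - f) * f) * (x * (1 - f))) := by
        rw [hudef]; noncomm_ring
      rw [this, h0f, zero_mul, mul_zero]
    have heq : f = f + u := hu 0 f (-u) (f + u) ⟨1, by simp⟩ hf
      ⟨2, by rw [pow_two, neg_mul_neg, huu]⟩
      (auxIdemAdd hf hufu huf huu) (by rw [zero_add]) (by abel)
    exact (left_eq_add.mp heq)
  have key2 : (1 - f) * x * f = 0 := by
    set u := (1 - f) * x * f with hudef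
    have hfu : f * u = 0 := by rw [hudef, ← mul_assoc, ← mul_assoc, hf0, zero_mul, zero_mul]
    have hufu : u * f = u := by rw [hudef, mul_assoc, hf.eq]
    have huu : u * u = 0 := by
      have : u * u = ((1 - f) * x) * ((f * (1 - f)) * (x * f)) := by
        rw [hudef]; noncomm_ring
      rw [this, hf0, zero_mul, mul_zero]
    have heq : f = f + u := hu 0 f (-u) (f + u) ⟨1, by simp⟩ hf
      ⟨2, by rw [pow_two, neg_mul_neg, huu]⟩
      (auxIdemAdd' hf hfu hufu huu) (by rw [zero_add]) (by abel)
    exact (left_eq_add.mp heq)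
  rw [mul_sub, mul_one, sub_eq_zero] at key1
  rw [sub_mul, one_mul, sub_mul, sub_eq_zero] at key2
  rw [key1, key2]

/-- Multiplying a nil-clean decomposition by a central idempotent gives a
nil-clean decomposition. -/
lemma auxDecomp {R : Type u} [Ring R] {c : R} (hc : IsIdempotentElem c)
    (hcen : ∀ x : R, c * x = x * c) {a v g : R} (hv : IsNilpotent v)
    (hg : IsIdempotentElem g) (hav : a = v + g) :
    IsNilpotent (v * c) ∧ IsIdempotentElem (g * c) ∧ a * c = v * c + g * c := by
  refine ⟨Commute.isNilpotent_mul_right (hcen v).symm hv, ?_, by rw [hav, add_mul]⟩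
  unfold IsIdempotentElem
  have h1 : (g * c) * (g * c) = g * ((c * g) * c) := by noncomm_ring
  rw [h1, hcen g, mul_assoc, hc.eq, ← mul_assoc, hg.eq]

theorem stmt16 (R : Type u) [Ring R] :
    (∀ a : R, IsZeroDivisorPair a → IsUniquelyNilClean a) ↔
      ((∀ a : R, IsZeroDivisorPair a → IsNilpotent a) ∨ UniquelyNilCleanRing R) := by
  constructor
  · intro H
    by_cases hD : ∀ a : R, IsZeroDivisorPair a → IsNilpotent a
    · exact Or.inl hD
    right
    push_neg at hD
    obtain ⟨q, hqzd, hqn⟩ := hD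
    -- the central idempotent e coming from q
    obtain ⟨⟨w, e, hw, he, hqe⟩, -⟩ := H q hqzd
    have hec : ∀ x : R, e * x = x * e := centralOfH H he
    have he' : IsIdempotentElem (1 - e) := he.one_sub
    have hec' : ∀ x : R, (1 - e) * x = x * (1 - e) := by
      intro x
      rw [sub_mul, mul_sub, one_mul, mul_one, hec x]
    have he0 : e ≠ 0 := by
      intro h
      exact hqn (by rw [hqe, h, add_zero]; exact hw)
    have he1 : e ≠ 1 := by
      intro h
      obtain ⟨b, c, hb, hc, hab, hca⟩ := hqzd
      have hunit : IsUnit q := by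
        rw [hqe, h, add_comm]
        exact hw.isUnit_one_add
      exact hb (hunit.mul_right_eq_zero.mp hab)
    have hne : (1 : R) - e ≠ 0 := sub_ne_zero.mpr fun h => he1 h.symm
    have hee : e * (1 - e) = 0 := by rw [mul_sub, mul_one, he.eq, sub_self]
    have hee' : (1 - e) * e = 0 := by rw [sub_mul, one_mul, he.eq, sub_self]
    -- for every a, a*e and a*(1-e) are zero-divisor pairs
    have zd1 : ∀ a : R, IsZeroDivisorPair (a * e) := by
      intro a
      refine ⟨1 - e, 1 - e, hne, hne, by rw [mul_assoc, hee, mul_zero], ?_⟩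
      calc (1 - e) * (a * e) = (a * (1 - e)) * e := by rw [← mul_assoc, ← hec' a]
      _ = a * ((1 - e) * e) := by rw [mul_assoc]
      _ = 0 := by rw [hee', mul_zero]
    have zd2 : ∀ a : R, IsZeroDivisorPair (a * (1 - e)) := by
      intro a
      refine ⟨e, e, he0, he0, by rw [mul_assoc, hee', mul_zero], ?_⟩
      calc e * (a * (1 - e)) = (a * e) * (1 - e) := by rw [← mul_assoc, ← hec a]
      _ = a * (e * (1 - e)) := by rw [mul_assoc]
      _ = 0 := by rw [hee, mul_zero]
    intro a
    obtain ⟨⟨w₁, e₁, hw₁, he₁, h₁⟩, hu₁⟩ := H (a * e) (zd1 a)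
    obtain ⟨⟨w₂, e₂, hw₂, he₂, h₂⟩, hu₂⟩ := H (a * (1 - e)) (zd2 a)
    -- e₁ = e₁ * e
    obtain ⟨n1, i1, d1⟩ := auxDecomp he hec hw₁ he₁ h₁
    rw [mul_assoc, he.eq] at d1
    have c₁ : e₁ = e₁ * e := hu₁ w₁ e₁ (w₁ * e) (e₁ * e) hw₁ he₁ n1 i1 h₁ d1
    have cw₁ : w₁ * e = w₁ := by
      have hw1eq : w₁ = a * e - e₁ := eq_sub_of_add_eq h₁.symm
      calc w₁ * e = (a * e - e₁) * e := by rw [← hw1eq]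
      _ = a * (e * e) - e₁ * e := by rw [sub_mul, mul_assoc]
      _ = a * e - e₁ := by rw [he.eq, ← c₁]
      _ = w₁ := hw1eq.symm
    -- e₂ = e₂ * (1 - e)
    obtain ⟨n2, i2, d2⟩ := auxDecomp he' hec' hw₂ he₂ h₂
    rw [mul_assoc, he'.eq] at d2
    have c₂ : e₂ = e₂ * (1 - e) := hu₂ w₂ e₂ (w₂ * (1 - e)) (e₂ * (1 - e)) hw₂ he₂ n2 i2 h₂ d2
    have ce₂ : e₂ * e = 0 := by
      have := c₂.symm
      rw [mul_sub, mul_one] at this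
      exact sub_eq_self.mp this
    have cw₂ : w₂ * e = 0 := by
      have hw2eq : w₂ = a * (1 - e) - e₂ := eq_sub_of_add_eq h₂.symm
      calc w₂ * e = (a * (1 - e) - e₂) * e := by rw [← hw2eq]
      _ = a * ((1 - e) * e) - e₂ * e := by rw [sub_mul, mul_assoc]
      _ = 0 := by rw [hee', ce₂, mul_zero, sub_zero]
    -- the cross products vanish
    have pw : w₁ * w₂ = 0 := by
      calc w₁ * w₂ = (w₁ * e) * w₂ := by rw [cw₁]
      _ = w₁ * (w₂ * e) := by rw [mul_assoc, hec w₂]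
      _ = 0 := by rw [cw₂, mul_zero]
    have pw' : w₂ * w₁ = 0 := by
      calc w₂ * w₁ = w₂ * (w₁ * e) := by rw [cw₁]
      _ = (w₂ * e) * w₁ := by rw [← hec w₁, ← mul_assoc]
      _ = 0 := by rw [cw₂, zero_mul]
    have pe : e₁ * e₂ = 0 := by
      calc e₁ * e₂ = (e₁ * e) * e₂ := by rw [← c₁]
      _ = e₁ * (e₂ * e) := by rw [mul_assoc, hec e₂]
      _ = 0 := by rw [ce₂, mul_zero]
    have pe' : e₂ * e₁ = 0 := by
      calc e₂ * e₁ = e₂ * (e₁ * e) := by rw [← c₁]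
      _ = (e₂ * e) * e₁ := by rw [← hec e₁, ← mul_assoc]
      _ = 0 := by rw [ce₂, zero_mul]
    constructor
    · refine ⟨w₁ + w₂, e₁ + e₂,
        Commute.isNilpotent_add (by rw [Commute, SemiconjBy, pw, pw']) hw₁ hw₂, ?_, ?_⟩
      · unfold IsIdempotentElem
        rw [add_mul, mul_add, mul_add, he₁.eq, he₂.eq, pe, pe']
        abel
      · have h : a = a * e + a * (1 - e) := by noncomm_ring
        rw [h, h₁, h₂]
        abel
    · intro v f v' f' hv hf hv' hf' hva hva'
      obtain ⟨m1, j1, g1⟩ := auxDecomp he hec hv hf hva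
      obtain ⟨m1', j1', g1'⟩ := auxDecomp he hec hv' hf' hva'
      have q1 : f * e = f' * e := hu₁ (v * e) (f * e) (v' * e) (f' * e) m1 j1 m1' j1' g1 g1'
      obtain ⟨m2, j2, g2⟩ := auxDecomp he' hec' hv hf hva
      obtain ⟨m2', j2', g2'⟩ := auxDecomp he' hec' hv' hf' hva'
      have q2 : f * (1 - e) = f' * (1 - e) :=
        hu₂ (v * (1 - e)) (f * (1 - e)) (v' * (1 - e)) (f' * (1 - e)) m2 j2 m2' j2' g2 g2'
      calc f = f * e + f * (1 - e) := by noncomm_ring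
      _ = f' * e + f' * (1 - e) := by rw [q1, q2]
      _ = f' := by noncomm_ring
  · rintro (hD | hU) a hzd
    · obtain ⟨b, c, hb, hc, hab, hca⟩ := hzd
      constructor
      · exact ⟨a, 0, hD a ⟨b, c, hb, hc, hab, hca⟩, IsIdempotentElem.zero, by rw [add_zero]⟩
      · intro w₁ e₁ w₂ e₂ hw₁ he₁ hw₂ he₂ h1 h2
        suffices claim : ∀ w f : R, IsNilpotent w → IsIdempotentElem f → a = w + f → f = 0 by
          rw [claim w₁ e₁ hw₁ he₁ h1, claim w₂ e₂ hw₂ he₂ h2]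
        intro w f hw hf haw
        by_cases hf1 : f = 1
        · exfalso
          have hunit : IsUnit a := by
            rw [haw, hf1, add_comm]
            exact hw.isUnit_one_add
          exact hb (hunit.mul_right_eq_zero.mp hab)
        have hne : (1 : R) - f ≠ 0 := sub_ne_zero.mpr fun h => hf1 h.symm
        exact hf.eq_zero_of_isNilpotent (hD f ⟨1 - f, 1 - f, hne, hne,
          by rw [mul_sub, mul_one, hf.eq, sub_self],
          by rw [sub_mul, one_mul, hf.eq, sub_self]⟩)
    · exact hU a
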